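/- Let k be a natural number and let G be a simple graph and P a set of at most 5k vertices of G such that: (i) every vertex of G has degree at most 7k + 7; (ii) G contains no three distinct vertices u, x, y with N(x) = N(y) = {u}; (iii) G − P contains no path on 5 vertices; and (iv) every connected component of G − P contains a vertex with a neighbor in P. Then G − P has at most 210k² + 210k edges. -/

import Mathlib

open SimpleGraph

set_option maxHeartbeats 1000000

section Helpers

variable {V : Type*}

private lemma walk_closed {H : SimpleGraph V} {S : Set V}
    (hcl : ∀ ⦃x y : V⦄, x ∈ S → H.Adj x y → y ∈ S) :
    ∀ {u v : V}, H.Walk u v → u ∈ S → v ∈ S := by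
  intro u v w
  induction w with
  | nil => exact id
  | cons h p ih => exact fun hu => ih (hcl hu h)

private lemma reach_closed {H : SimpleGraph V} {S : Set V}
    (hcl : ∀ ⦃x y : V⦄, x ∈ S → H.Adj x y → y ∈ S) {u v : V}
    (h : H.Reachable u v) (hu : u ∈ S) : v ∈ S := by
  obtain ⟨w⟩ := h
  exact walk_closed hcl w hu

/-- Counting pendants at `u`: if every vertex of `S` has neighborhood exactly `{u}`, then
`|S| ≤ |S ∩ M| + 1`. -/
private lemma pend_count [Fintype V] {H : SimpleGraph V} {M : Set V}
    (hpend : ∀ u : V, ({x | x ∉ M ∧ H.neighborSet x = {u}} : Set V).ncard ≤ 1)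
    {u : V} {S : Set V} (hS : ∀ z ∈ S, H.neighborSet z = {u}) :
    S.ncard ≤ (S ∩ M).ncard + 1 := by
  have h1 := Set.ncard_inter_add_ncard_diff_eq_ncard S M (Set.toFinite S)
  have h2 : (S \ M).ncard ≤ 1 := by
    refine le_trans (Set.ncard_le_ncard ?_ (Set.toFinite _)) (hpend u)
    rintro z ⟨hzS, hzM⟩
    exact ⟨hzM, hS z hzS⟩
  omega

private lemma walk_avoid {G H : SimpleGraph V} {P : Finset V}
    (hH : ∀ x y : V, G.Adj x y → x ∉ P → y ∉ P → H.Adj x y) {u v : V} (w : G.Walk u v)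
    (hw : ∀ z ∈ w.support, z ∉ P) : H.Reachable u v := by
  induction w with
  | nil => exact Reachable.refl _
  | @cons u' b v' hadj' w' ih =>
      have hu' : u' ∉ P := hw u' (by simp)
      have hb : b ∉ P := hw b (by simp [Walk.support_cons])
      refine (Adj.reachable (hH _ _ hadj' hu' hb)).trans (ih ?_)
      intro z hz
      exact hw z (by simp [Walk.support_cons, hz])

/-- Case of a maximal 4-chain `p-q-r-s` with a pendant `z0` at `q`. -/
private lemma caseA2 [Fintype V] (H : SimpleGraph V) (M : Set V) (a : V)
    (h5 : ∀ v1 v2 v3 v4 v5 : V, H.Adj v1 v2 → H.Adj v2 v3 → H.Adj v3 v4 → H.Adj v4 v5 →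
      v1 ≠ v3 → v1 ≠ v4 → v1 ≠ v5 → v2 ≠ v4 → v2 ≠ v5 → v3 ≠ v5 → False)
    (hpend : ∀ u : V, ({x | x ∉ M ∧ H.neighborSet x = {u}} : Set V).ncard ≤ 1)
    (hm : 1 ≤ ({m | m ∈ M ∧ H.Reachable a m} : Set V).ncard)
    (p q r s z0 : V) (hpq : H.Adj p q) (hqr : H.Adj q r) (hrs : H.Adj r s)
    (hpr : p ≠ r) (hps : p ≠ s) (hqs : q ≠ s) (hrp : H.Reachable a p)
    (hz0 : z0 ∉ ({p, q, r, s} : Set V)) (hz0q : H.Adj q z0) :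
    ({e | e ∈ H.edgeSet ∧ ∀ x ∈ e, H.Reachable a x} : Set (Sym2 V)).ncard ≤
      6 * ({m | m ∈ M ∧ H.Reachable a m} : Set V).ncard := by
  classical
  set E1 : Set (Sym2 V) := {e | e ∈ H.edgeSet ∧ ∀ x ∈ e, H.Reachable a x} with hE1
  set Mc : Set V := {m | m ∈ M ∧ H.Reachable a m} with hMc
  set core4 : Set V := {p, q, r, s} with hcore4
  have hmemc : ∀ z : V, z ∈ core4 ↔ z = p ∨ z = q ∨ z = r ∨ z = s := by
    intro z; simp [hcore4]
  have hnc : ∀ z : V, z ∉ core4 → z ≠ p ∧ z ≠ q ∧ z ≠ r ∧ z ≠ s := by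
    intro z hz; rw [hmemc] at hz; push_neg at hz; exact hz
  obtain ⟨hz0p, hz0Q, hz0r, hz0s⟩ := hnc z0 hz0
  have hpqne : p ≠ q := hpq.ne
  have hqrne : q ≠ r := hqr.ne
  have hrsne : r ≠ s := hrs.ne
  -- chord exclusions from the pendant z0 at q
  have hnpr : ¬H.Adj p r := fun h =>
    h5 z0 q p r s hz0q.symm hpq.symm h hrs hz0p hz0r hz0s hqrne hqs hps
  have hnps : ¬H.Adj p s := fun h =>
    h5 z0 q p s r hz0q.symm hpq.symm h hrs.symm hz0p hz0s hz0r hqs hqrne hpr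
  -- neighbourhood facts
  have hNp : ∀ w : V, H.Adj p w → w = q := by
    intro w hw
    by_contra hwq
    rcases em (w ∈ core4) with hwc | hwc
    · rw [hmemc] at hwc
      rcases hwc with rfl | rfl | rfl | rfl
      · exact hw.ne' rfl
      · exact hwq rfl
      · exact hnpr hw
      · exact hnps hw
    · obtain ⟨_, _, h3, h4⟩ := hnc w hwc
      exact h5 w p q r s hw.symm hpq hqr hrs (hnc w hwc).2.1 h3 h4 hpr hps hqs
  have hNs : ∀ w : V, H.Adj s w → w = q ∨ w = r := by
    intro w hw
    by_contra hwc
    push_neg at hwc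
    obtain ⟨hwq, hwr⟩ := hwc
    rcases em (w ∈ core4) with hc | hc
    · rw [hmemc] at hc
      rcases hc with rfl | rfl | rfl | rfl
      · exact hnps hw.symm
      · exact hwq rfl
      · exact hwr rfl
      · exact hw.ne' rfl
    · obtain ⟨h1, h2, h3, h4⟩ := hnc w hc
      exact h5 w s r q p hw.symm hrs.symm hqr.symm hpq.symm h3 h2 h1
        (Ne.symm hqs) (Ne.symm hps) (Ne.symm hpr)
  have hFq : ∀ z : V, z ∉ core4 → H.Adj q z → ∀ w : V, H.Adj z w → w = q := by
    intro z hz hqz w hw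
    obtain ⟨hz1, hz2, hz3, hz4⟩ := hnc z hz
    by_contra hwq
    rcases em (w ∈ core4) with hc | hc
    · rw [hmemc] at hc
      rcases hc with rfl | rfl | rfl | rfl
      · exact hz2 (hNp z hw.symm)
      · exact hwq rfl
      · exact h5 p q z w s hpq hqz hw hrs (Ne.symm hz1) hpr hps hqrne hqs hz4
      · rcases hNs z hw.symm with h | h
        · exact hz2 h
        · exact hz3 h
    · obtain ⟨hc1, hc2, hc3, hc4⟩ := hnc w hc
      exact h5 w z q r s hw.symm hqz.symm hqr hrs hc2 hc3 hc4 hz3 hz4 hqs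
  have hFr : ∀ z : V, z ∉ core4 → H.Adj r z → ∀ w : V, H.Adj z w → w = r := by
    intro z hz hrz w hw
    obtain ⟨hz1, hz2, hz3, hz4⟩ := hnc z hz
    by_contra hwr
    rcases em (w ∈ core4) with hc | hc
    · rw [hmemc] at hc
      rcases hc with rfl | rfl | rfl | rfl
      · exact hz2 (hNp z hw.symm)
      · exact hqrne (hFq z hz hw.symm r hrz.symm).symm
      · exact hwr rfl
      · rcases hNs z hw.symm with h | h
        · exact hz2 h
        · exact hz3 h
    · obtain ⟨hc1, hc2, hc3, hc4⟩ := hnc w hc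
      exact h5 w z r q p hw.symm hrz.symm hqr.symm hpq.symm hc3 hc2 hc1 hz2 hz1
        (Ne.symm hpr)
  -- pendant sets
  set Pq : Set V := {z | z ∉ core4 ∧ H.Adj q z} with hPqdef
  set Pr : Set V := {z | z ∉ core4 ∧ H.Adj r z} with hPrdef
  -- reachability
  have hra_q : H.Reachable a q := hrp.trans hpq.reachable
  have hra_r : H.Reachable a r := hra_q.trans hqr.reachable
  have hra_s : H.Reachable a s := hra_r.trans hrs.reachable
  have hra_Pq : ∀ z ∈ Pq, H.Reachable a z := fun z hz => hra_q.trans hz.2.reachable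
  have hra_Pr : ∀ z ∈ Pr, H.Reachable a z := fun z hz => hra_r.trans hz.2.reachable
  -- closure
  set S : Set V := core4 ∪ Pq ∪ Pr with hSdef
  have hpS : p ∈ S := Or.inl (Or.inl ((hmemc p).2 (Or.inl rfl)))
  have hclosed : ∀ ⦃x y : V⦄, x ∈ S → H.Adj x y → y ∈ S := by
    rintro x y ((hx | hx) | hx) hxy
    · rw [hmemc] at hx
      rcases hx with rfl | rfl | rfl | rfl
      · exact Or.inl (Or.inl ((hmemc y).2 (Or.inr (Or.inl (hNp y hxy)))))
      · rcases em (y ∈ core4) with hy | hy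
        · exact Or.inl (Or.inl hy)
        · exact Or.inl (Or.inr ⟨hy, hxy⟩)
      · rcases em (y ∈ core4) with hy | hy
        · exact Or.inl (Or.inl hy)
        · exact Or.inr ⟨hy, hxy⟩
      · rcases hNs y hxy with rfl | rfl
        · exact Or.inl (Or.inl ((hmemc y).2 (Or.inr (Or.inl rfl))))
        · exact Or.inl (Or.inl ((hmemc y).2 (Or.inr (Or.inr (Or.inl rfl)))))
    · have := hFq x hx.1 hx.2 y hxy
      subst this
      exact Or.inl (Or.inl ((hmemc y).2 (Or.inr (Or.inl rfl))))
    · have := hFr x hx.1 hx.2 y hxy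
      subst this
      exact Or.inl (Or.inl ((hmemc y).2 (Or.inr (Or.inr (Or.inl rfl)))))
  have hsub : ∀ x : V, H.Reachable a x → x ∈ S := fun x hx =>
    reach_closed hclosed (hrp.symm.trans hx) hpS
  -- enumeration target
  set T : Set (Sym2 V) := insert s(p, q) (insert s(q, r) (insert s(r, s) (insert s(q, s)
      (((fun z => s(q, z)) '' Pq) ∪ ((fun z => s(r, z)) '' Pr))))) with hT
  have hE1T : E1 ⊆ T := by
    intro e he
    revert he
    refine Sym2.ind (fun x y he => ?_) e
    obtain ⟨hedge, hall⟩ := he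
    rw [SimpleGraph.mem_edgeSet] at hedge
    have hxS : x ∈ S := hsub x (hall x (by simp))
    have hyS : y ∈ S := hsub y (hall y (by simp))
    have hmem_img_q : ∀ z ∈ Pq, s(q, z) ∈ T := by
      intro z hz
      simp only [hT, Set.mem_insert_iff, Set.mem_union, Set.mem_image]
      exact Or.inr (Or.inr (Or.inr (Or.inr (Or.inl ⟨z, hz, rfl⟩))))
    have hmem_img_r : ∀ z ∈ Pr, s(r, z) ∈ T := by
      intro z hz
      simp only [hT, Set.mem_insert_iff, Set.mem_union, Set.mem_image]
      exact Or.inr (Or.inr (Or.inr (Or.inr (Or.inr ⟨z, hz, rfl⟩))))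
    rcases hxS with (hx | hx) | hx
    · rw [hmemc] at hx
      rcases hx with rfl | rfl | rfl | rfl
      · -- x = p, y = q
        obtain rfl := hNp y hedge
        simp [hT]
      · -- x = q
        rcases em (y ∈ core4) with hy | hy
        · rw [hmemc] at hy
          rcases hy with rfl | rfl | rfl | rfl
          · rw [Sym2.eq_swap]; simp [hT]
          · exact (H.loopless.irrefl _ hedge).elim
          · simp [hT]
          · simp [hT]
        · exact hmem_img_q y ⟨hy, hedge⟩
      · -- x = r
        rcases em (y ∈ core4) with hy | hy
        · rw [hmemc] at hy
          rcases hy with rfl | rfl | rfl | rfl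
          · exact absurd hedge.symm hnpr
          · rw [Sym2.eq_swap]; simp [hT]
          · exact (H.loopless.irrefl _ hedge).elim
          · simp [hT]
        · exact hmem_img_r y ⟨hy, hedge⟩
      · -- x = s
        rcases hNs y hedge with rfl | rfl
        · rw [Sym2.eq_swap]; simp [hT]
        · rw [Sym2.eq_swap]; simp [hT]
    · -- x ∈ Pq
      obtain rfl := hFq x hx.1 hx.2 y hedge
      rw [Sym2.eq_swap]
      exact hmem_img_q x hx
    · -- x ∈ Pr
      obtain rfl := hFr x hx.1 hx.2 y hedge
      rw [Sym2.eq_swap]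
      exact hmem_img_r x hx
  have hE1card : E1.ncard ≤ 4 + (Pq.ncard + Pr.ncard) := by
    have h0 : E1.ncard ≤ T.ncard := Set.ncard_le_ncard hE1T (Set.toFinite _)
    have hu : (((fun z => s(q, z)) '' Pq) ∪ ((fun z => s(r, z)) '' Pr)).ncard ≤
        Pq.ncard + Pr.ncard := by
      refine le_trans (Set.ncard_union_le _ _) ?_
      exact Nat.add_le_add (Set.ncard_image_le (Set.toFinite _))
        (Set.ncard_image_le (Set.toFinite _))
    have h1 := Set.ncard_insert_le s(q, s)
      (((fun z => s(q, z)) '' Pq) ∪ ((fun z => s(r, z)) '' Pr))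
    have h2 := Set.ncard_insert_le s(r, s) (insert s(q, s)
      (((fun z => s(q, z)) '' Pq) ∪ ((fun z => s(r, z)) '' Pr)))
    have h3 := Set.ncard_insert_le s(q, r) (insert s(r, s) (insert s(q, s)
      (((fun z => s(q, z)) '' Pq) ∪ ((fun z => s(r, z)) '' Pr))))
    have h4 := Set.ncard_insert_le s(p, q) (insert s(q, r) (insert s(r, s) (insert s(q, s)
      (((fun z => s(q, z)) '' Pq) ∪ ((fun z => s(r, z)) '' Pr)))))
    rw [← hT] at h4
    omega
  -- pendant count at q
  have hpsing : H.neighborSet p = {q} := by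
    ext w
    simp only [SimpleGraph.mem_neighborSet, Set.mem_singleton_iff]
    exact ⟨hNp w, fun h => h ▸ hpq⟩
  have hpPq : p ∉ Pq := fun h => h.1 ((hmemc p).2 (Or.inl rfl))
  have hPq_sing : ∀ z ∈ Pq, H.neighborSet z = {q} := by
    intro z hz
    ext w
    simp only [SimpleGraph.mem_neighborSet, Set.mem_singleton_iff]
    exact ⟨hFq z hz.1 hz.2 w, fun h => h ▸ hz.2.symm⟩
  have hPqM : Pq.ncard ≤ (insert p Pq ∩ M).ncard := by
    have hc : (insert p Pq).ncard = Pq.ncard + 1 :=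
      Set.ncard_insert_of_notMem hpPq (Set.toFinite _)
    have hp : (insert p Pq).ncard ≤ (insert p Pq ∩ M).ncard + 1 := by
      refine pend_count (u := q) hpend ?_
      rintro z (rfl | hz)
      · exact hpsing
      · exact hPq_sing z hz
    omega
  have hPqMc : insert p Pq ∩ M ⊆ Mc := by
    rintro z ⟨hz1, hz2⟩
    rcases hz1 with rfl | hz1
    · exact ⟨hz2, hrp⟩
    · exact ⟨hz2, hra_Pq z hz1⟩
  rcases Set.eq_empty_or_nonempty Pr with hPre | ⟨w0, hw0⟩
  · -- no pendant at r
    have hPr0 : Pr.ncard = 0 := by rw [hPre]; exact Set.ncard_empty _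
    have := Set.ncard_le_ncard hPqMc (Set.toFinite _)
    omega
  · -- pendant w0 at r
    obtain ⟨hw0c, hw0r⟩ := hw0
    obtain ⟨hw01, hw02, hw03, hw04⟩ := hnc w0 hw0c
    have hnqs : ¬H.Adj q s := fun h =>
      h5 w0 r s q p hw0r.symm hrs h.symm hpq.symm hw04 hw02 hw01
        (Ne.symm hqrne) (Ne.symm hpr) (Ne.symm hps)
    have hssing : H.neighborSet s = {r} := by
      ext w
      simp only [SimpleGraph.mem_neighborSet, Set.mem_singleton_iff]
      constructor
      · intro hw
        rcases hNs w hw with rfl | rfl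
        · exact absurd hw.symm hnqs
        · rfl
      · rintro rfl; exact hrs.symm
    have hsPr : s ∉ Pr := fun h => h.1 ((hmemc s).2 (Or.inr (Or.inr (Or.inr rfl))))
    have hPr_sing : ∀ z ∈ Pr, H.neighborSet z = {r} := by
      intro z hz
      ext w
      simp only [SimpleGraph.mem_neighborSet, Set.mem_singleton_iff]
      exact ⟨hFr z hz.1 hz.2 w, fun h => h ▸ hz.2.symm⟩
    have hPrM : Pr.ncard ≤ (insert s Pr ∩ M).ncard := by
      have hc : (insert s Pr).ncard = Pr.ncard + 1 :=
        Set.ncard_insert_of_notMem hsPr (Set.toFinite _)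
      have hp : (insert s Pr).ncard ≤ (insert s Pr ∩ M).ncard + 1 := by
        refine pend_count (u := r) hpend ?_
        rintro z (rfl | hz)
        · exact hssing
        · exact hPr_sing z hz
      omega
    have hPrMc : insert s Pr ∩ M ⊆ Mc := by
      rintro z ⟨hz1, hz2⟩
      rcases hz1 with rfl | hz1
      · exact ⟨hz2, hra_s⟩
      · exact ⟨hz2, hra_Pr z hz1⟩
    have hdisjQR : Disjoint (insert p Pq ∩ M) (insert s Pr ∩ M) := by
      rw [Set.disjoint_left]
      rintro z ⟨hz1, _⟩ ⟨hz2, _⟩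
      rcases hz1 with rfl | hz1
      · rcases hz2 with h | h
        · exact hps h
        · exact h.1 ((hmemc z).2 (Or.inl rfl))
      · rcases hz2 with rfl | hz2
        · exact hz1.1 ((hmemc z).2 (Or.inr (Or.inr (Or.inr rfl))))
        · exact (Ne.symm hqrne) (hFq z hz1.1 hz1.2 r hz2.2.symm)
    have hsum : (insert p Pq ∩ M).ncard + (insert s Pr ∩ M).ncard ≤ Mc.ncard := by
      rw [← Set.ncard_union_eq hdisjQR (Set.toFinite _) (Set.toFinite _)]
      refine Set.ncard_le_ncard ?_ (Set.toFinite _)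
      rintro z (hz | hz)
      · exact hPqMc hz
      · exact hPrMc hz
    omega

/-- The component of an edge `a-b` carries at most `6·|M ∩ comp|` edges. -/
private lemma core [Fintype V] (H : SimpleGraph V) (M : Set V) (a b : V) (hab : H.Adj a b)
    (h5 : ∀ v1 v2 v3 v4 v5 : V, H.Adj v1 v2 → H.Adj v2 v3 → H.Adj v3 v4 → H.Adj v4 v5 →
      v1 ≠ v3 → v1 ≠ v4 → v1 ≠ v5 → v2 ≠ v4 → v2 ≠ v5 → v3 ≠ v5 → False)
    (hpend : ∀ u : V, ({x | x ∉ M ∧ H.neighborSet x = {u}} : Set V).ncard ≤ 1)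
    (hreach : ∀ x y : V, H.Adj x y → ∃ m ∈ M, H.Reachable x m) :
    ({e | e ∈ H.edgeSet ∧ ∀ x ∈ e, H.Reachable a x} : Set (Sym2 V)).ncard ≤
      6 * ({m | m ∈ M ∧ H.Reachable a m} : Set V).ncard := by
  classical
  set E1 : Set (Sym2 V) := {e | e ∈ H.edgeSet ∧ ∀ x ∈ e, H.Reachable a x} with hE1
  set Mc : Set V := {m | m ∈ M ∧ H.Reachable a m} with hMc
  have hm : 1 ≤ Mc.ncard := by
    obtain ⟨m, hmM, hrm⟩ := hreach a b hab
    have hmem : m ∈ Mc := ⟨hmM, hrm⟩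
    have := (Set.ncard_pos (Set.toFinite Mc)).mpr ⟨m, hmem⟩
    omega
  by_cases hA : ∃ p q r s : V,
      H.Adj p q ∧ H.Adj q r ∧ H.Adj r s ∧ p ≠ r ∧ p ≠ s ∧ q ≠ s ∧ H.Reachable a p
  · obtain ⟨p, q, r, s, hpq, hqr, hrs, hpr, hps, hqs, hrp⟩ := hA
    by_cases hEq : ∃ z, z ∉ ({p, q, r, s} : Set V) ∧ H.Adj q z
    · obtain ⟨z0, hz0, hz0q⟩ := hEq
      exact caseA2 H M a h5 hpend hm p q r s z0 hpq hqr hrs hpr hps hqs hrp hz0 hz0q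
    by_cases hEr : ∃ z, z ∉ ({p, q, r, s} : Set V) ∧ H.Adj r z
    · obtain ⟨z0, hz0, hz0r⟩ := hEr
      have hz0' : z0 ∉ ({s, r, q, p} : Set V) := by
        intro h
        apply hz0
        simp only [Set.mem_insert_iff, Set.mem_singleton_iff] at h ⊢
        tauto
      exact caseA2 H M a h5 hpend hm s r q p z0 hrs.symm hqr.symm hpq.symm
        (Ne.symm hqs) (Ne.symm hps) (Ne.symm hpr)
        (hrp.trans (hpq.reachable.trans (hqr.reachable.trans hrs.reachable))) hz0' hz0r
    · -- Case A1: no pendants at q or r; the component is exactly {p, q, r, s}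
      push_neg at hEq hEr
      set core4 : Set V := {p, q, r, s} with hcore4
      have hmemc : ∀ z : V, z ∈ core4 ↔ z = p ∨ z = q ∨ z = r ∨ z = s := by
        intro z; simp [hcore4]
      have hnc : ∀ z : V, z ∉ core4 → z ≠ p ∧ z ≠ q ∧ z ≠ r ∧ z ≠ s := by
        intro z hz; rw [hmemc] at hz; push_neg at hz; exact hz
      have hNp : ∀ w : V, H.Adj p w → w ∈ core4 := by
        intro w hw
        by_contra hc
        obtain ⟨h1, h2, h3, h4⟩ := hnc w hc
        exact h5 w p q r s hw.symm hpq hqr hrs h2 h3 h4 hpr hps hqs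
      have hNs : ∀ w : V, H.Adj s w → w ∈ core4 := by
        intro w hw
        by_contra hc
        obtain ⟨h1, h2, h3, h4⟩ := hnc w hc
        exact h5 w s r q p hw.symm hrs.symm hqr.symm hpq.symm h3 h2 h1
          (Ne.symm hqs) (Ne.symm hps) (Ne.symm hpr)
      have hNq : ∀ w : V, H.Adj q w → w ∈ core4 := by
        intro w hw
        by_contra hc
        exact hEq w hc hw
      have hNr : ∀ w : V, H.Adj r w → w ∈ core4 := by
        intro w hw
        by_contra hc
        exact hEr w hc hw
      have hclosed : ∀ ⦃x y : V⦄, x ∈ core4 → H.Adj x y → y ∈ core4 := by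
        intro x y hx hxy
        rw [hmemc] at hx
        rcases hx with rfl | rfl | rfl | rfl
        exacts [hNp y hxy, hNq y hxy, hNr y hxy, hNs y hxy]
      have hsub : ∀ x : V, H.Reachable a x → x ∈ core4 := fun x hx =>
        reach_closed hclosed (hrp.symm.trans hx) ((hmemc p).2 (Or.inl rfl))
      set T6 : Set (Sym2 V) := insert s(p, q) (insert s(p, r) (insert s(p, s)
        (insert s(q, r) (insert s(q, s) {s(r, s)})))) with hT6
      have hE1T : E1 ⊆ T6 := by
        intro e he
        revert he
        refine Sym2.ind (fun x y he => ?_) e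
        obtain ⟨hedge, hall⟩ := he
        rw [SimpleGraph.mem_edgeSet] at hedge
        have hx := hsub x (hall x (by simp))
        have hy := hsub y (hall y (by simp))
        rw [hmemc] at hx hy
        rcases hx with rfl | rfl | rfl | rfl <;> rcases hy with rfl | rfl | rfl | rfl <;>
          first
            | exact (H.loopless.irrefl _ hedge).elim
            | (simp only [hT6, Set.mem_insert_iff, Set.mem_singleton_iff, Sym2.eq_iff]; tauto)
      have h6 : T6.ncard ≤ 6 := by
        have h1 := Set.ncard_insert_le s(q, s) ({s(r, s)} : Set (Sym2 V))
        have h2 := Set.ncard_insert_le s(q, r) (insert s(q, s) {s(r, s)})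
        have h3 := Set.ncard_insert_le s(p, s) (insert s(q, r) (insert s(q, s) {s(r, s)}))
        have h4 := Set.ncard_insert_le s(p, r)
          (insert s(p, s) (insert s(q, r) (insert s(q, s) {s(r, s)})))
        have h5' := Set.ncard_insert_le s(p, q)
          (insert s(p, r) (insert s(p, s) (insert s(q, r) (insert s(q, s) {s(r, s)}))))
        have h0 : ({s(r, s)} : Set (Sym2 V)).ncard = 1 := Set.ncard_singleton _
        rw [← hT6] at h5'
        omega
      have := Set.ncard_le_ncard hE1T (Set.toFinite _)
      omega
  · by_cases hB : ∃ x u y : V, H.Adj x u ∧ H.Adj u y ∧ x ≠ y ∧ H.Reachable a x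
    · obtain ⟨x, u, y, hxu, huy, hxy, hrx⟩ := hB
      have hra_u : H.Reachable a u := hrx.trans hxu.reachable
      have hra_y : H.Reachable a y := hra_u.trans huy.reachable
      by_cases htri : H.Adj x y
      · -- triangle {x, u, y}
        have hclosed : ∀ ⦃w z : V⦄, w ∈ ({x, u, y} : Set V) → H.Adj w z →
            z ∈ ({x, u, y} : Set V) := by
          intro w z hw hwz
          by_contra hz
          simp only [Set.mem_insert_iff, Set.mem_singleton_iff, not_or] at hz
          obtain ⟨hz1, hz2, hz3⟩ := hz
          simp only [Set.mem_insert_iff, Set.mem_singleton_iff] at hw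
          rcases hw with rfl | rfl | rfl
          · exact hA ⟨z, w, u, y, hwz.symm, hxu, huy, hz2, hz3, hxy,
              hrx.trans hwz.reachable⟩
          · exact hA ⟨z, w, x, y, hwz.symm, hxu.symm, htri, hz1, hz3, huy.ne,
              hra_u.trans hwz.reachable⟩
          · exact hA ⟨z, w, u, x, hwz.symm, huy.symm, hxu.symm, hz2, hz1, Ne.symm hxy,
              hra_y.trans hwz.reachable⟩
        have hsub : ∀ w : V, H.Reachable a w → w ∈ ({x, u, y} : Set V) := fun w hw =>
          reach_closed hclosed (hrx.symm.trans hw) (Or.inl rfl)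
        set T3 : Set (Sym2 V) := insert s(x, u) (insert s(u, y) {s(x, y)}) with hT3
        have hE1T : E1 ⊆ T3 := by
          intro e he
          revert he
          refine Sym2.ind (fun w z he => ?_) e
          obtain ⟨hedge, hall⟩ := he
          rw [SimpleGraph.mem_edgeSet] at hedge
          have hw := hsub w (hall w (by simp))
          have hz := hsub z (hall z (by simp))
          simp only [Set.mem_insert_iff, Set.mem_singleton_iff] at hw hz
          rcases hw with rfl | rfl | rfl <;> rcases hz with rfl | rfl | rfl <;>
            first
              | exact (H.loopless.irrefl _ hedge).elim
              | (simp only [hT3, Set.mem_insert_iff, Set.mem_singleton_iff, Sym2.eq_iff];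
                  tauto)
        have h3 : T3.ncard ≤ 3 := by
          have h1 := Set.ncard_insert_le s(u, y) ({s(x, y)} : Set (Sym2 V))
          have h2 := Set.ncard_insert_le s(x, u) (insert s(u, y) {s(x, y)})
          have h0 : ({s(x, y)} : Set (Sym2 V)).ncard = 1 := Set.ncard_singleton _
          rw [← hT3] at h2
          omega
        have := Set.ncard_le_ncard hE1T (Set.toFinite _)
        omega
      · -- star centered at u
        have hNx : ∀ w : V, H.Adj x w → w = u := by
          intro w hw
          by_contra hwu
          by_cases hwy : w = y
          · subst hwy; exact htri hw
          · exact hA ⟨w, x, u, y, hw.symm, hxu, huy, hwu, hwy, hxy,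
              hrx.trans hw.reachable⟩
        have hNy : ∀ w : V, H.Adj y w → w = u := by
          intro w hw
          by_contra hwu
          by_cases hwx : w = x
          · subst hwx; exact htri hw.symm
          · exact hA ⟨w, y, u, x, hw.symm, huy.symm, hxu.symm, hwu, hwx, Ne.symm hxy,
              hra_y.trans hw.reachable⟩
        have hNu : ∀ z : V, H.Adj u z → ∀ w : V, H.Adj z w → w = u := by
          intro z hz w hw
          by_contra hwu
          by_cases hzx : z = x
          · subst hzx; exact hwu (hNx w hw)
          by_cases hzy : z = y
          · subst hzy; exact hwu (hNy w hw)
          by_cases hwx : w = x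
          · subst hwx; exact hz.ne' (hNx z hw.symm)
          by_cases hwy : w = y
          · subst hwy; exact hz.ne' (hNy z hw.symm)
          exact hA ⟨w, z, u, x, hw.symm, hz.symm, hxu.symm, hwu, hwx, hzx,
            (hra_u.trans hz.reachable).trans hw.reachable⟩
        have hclosed : ∀ ⦃w z : V⦄, w ∈ ({u} : Set V) ∪ H.neighborSet u → H.Adj w z →
            z ∈ ({u} : Set V) ∪ H.neighborSet u := by
          rintro w z (rfl | hw) hwz
          · exact Or.inr hwz
          · exact Or.inl (hNu w hw z hwz)
        have hsub : ∀ w : V, H.Reachable a w → w ∈ ({u} : Set V) ∪ H.neighborSet u :=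
          fun w hw => reach_closed hclosed (hra_u.symm.trans hw) (Or.inl rfl)
        have hE1T : E1 ⊆ (fun z => s(u, z)) '' H.neighborSet u := by
          intro e he
          revert he
          refine Sym2.ind (fun w z he => ?_) e
          obtain ⟨hedge, hall⟩ := he
          rw [SimpleGraph.mem_edgeSet] at hedge
          have hw := hsub w (hall w (by simp))
          have hz := hsub z (hall z (by simp))
          rcases hw with rfl | hw
          · exact ⟨z, hedge, rfl⟩
          · obtain rfl := hNu w hw z hedge
            exact ⟨w, hw, Sym2.eq_swap⟩
        have hcard : E1.ncard ≤ (H.neighborSet u).ncard := by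
          refine le_trans (Set.ncard_le_ncard hE1T (Set.toFinite _)) ?_
          exact Set.ncard_image_le (Set.toFinite _)
        have hpendu : (H.neighborSet u).ncard ≤ (H.neighborSet u ∩ M).ncard + 1 := by
          refine pend_count (u := u) hpend ?_
          intro z hz
          ext w
          simp only [SimpleGraph.mem_neighborSet, Set.mem_singleton_iff]
          exact ⟨hNu z hz w, fun h => h ▸ hz.symm⟩
        have hMcsub : H.neighborSet u ∩ M ⊆ Mc := by
          rintro z ⟨hz1, hz2⟩
          exact ⟨hz2, hra_u.trans hz1.reachable⟩
        have := Set.ncard_le_ncard hMcsub (Set.toFinite _)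
        omega
    · -- Case C: the component is just the edge {a, b}
      have hclosed : ∀ ⦃w z : V⦄, w ∈ ({a, b} : Set V) → H.Adj w z →
          z ∈ ({a, b} : Set V) := by
        intro w z hw hwz
        by_contra hz
        simp only [Set.mem_insert_iff, Set.mem_singleton_iff, not_or] at hz
        obtain ⟨hz1, hz2⟩ := hz
        simp only [Set.mem_insert_iff, Set.mem_singleton_iff] at hw
        rcases hw with rfl | rfl
        · exact hB ⟨z, w, b, hwz.symm, hab, hz2, hwz.reachable⟩
        · exact hB ⟨z, w, a, hwz.symm, hab.symm, hz1, hab.reachable.trans hwz.reachable⟩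
      have hsub : ∀ w : V, H.Reachable a w → w ∈ ({a, b} : Set V) := fun w hw =>
        reach_closed hclosed hw (Or.inl rfl)
      have hE1T : E1 ⊆ ({s(a, b)} : Set (Sym2 V)) := by
        intro e he
        revert he
        refine Sym2.ind (fun w z he => ?_) e
        obtain ⟨hedge, hall⟩ := he
        rw [SimpleGraph.mem_edgeSet] at hedge
        have hw := hsub w (hall w (by simp))
        have hz := hsub z (hall z (by simp))
        simp only [Set.mem_insert_iff, Set.mem_singleton_iff] at hw hz
        rcases hw with rfl | rfl <;> rcases hz with rfl | rfl <;>
          first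
            | exact (H.loopless.irrefl _ hedge).elim
            | (simp only [Set.mem_singleton_iff, Sym2.eq_iff]; try tauto)
      have := Set.ncard_le_ncard hE1T (Set.toFinite _)
      rw [Set.ncard_singleton] at this
      omega

/-- The graph obtained by deleting all edges in the component of `a`. -/
private def cut (H : SimpleGraph V) (a : V) : SimpleGraph V where
  Adj x y := H.Adj x y ∧ ¬H.Reachable a x ∧ ¬H.Reachable a y
  symm := ⟨by rintro x y ⟨h1, h2, h3⟩; exact ⟨h1.symm, h3, h2⟩⟩
  loopless := ⟨fun x h => H.loopless.irrefl x h.1⟩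

private lemma reach_cut {H : SimpleGraph V} {a u v : V} (w : H.Walk u v)
    (hu : ¬H.Reachable a u) : (cut H a).Reachable u v := by
  induction w with
  | nil => exact Reachable.refl _
  | @cons u' b v' hadj p ih =>
      have hb : ¬H.Reachable a b := fun h => hu (h.trans hadj.reachable.symm)
      exact (Adj.reachable (G := cut H a) ⟨hadj, hu, hb⟩).trans (ih hb)

private lemma key [Fintype V] : ∀ (n : ℕ) (H : SimpleGraph V) (M : Set V),
    H.edgeSet.ncard ≤ n →
    (∀ v1 v2 v3 v4 v5 : V, H.Adj v1 v2 → H.Adj v2 v3 → H.Adj v3 v4 → H.Adj v4 v5 →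
      v1 ≠ v3 → v1 ≠ v4 → v1 ≠ v5 → v2 ≠ v4 → v2 ≠ v5 → v3 ≠ v5 → False) →
    (∀ u : V, ({x | x ∉ M ∧ H.neighborSet x = {u}} : Set V).ncard ≤ 1) →
    (∀ x y : V, H.Adj x y → ∃ m ∈ M, H.Reachable x m) →
    H.edgeSet.ncard ≤ 6 * M.ncard := by
  intro n
  induction n with
  | zero => intro H M hle _ _ _; omega
  | succ n ih =>
    intro H M hle h5 hpend hreach
    rcases Set.eq_empty_or_nonempty H.edgeSet with hne | ⟨e, he⟩
    · simp [hne]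
    obtain ⟨a, b, hab⟩ : ∃ a b : V, H.Adj a b := by
      revert he
      refine Sym2.ind (fun x y he => ?_) e
      exact ⟨x, y, he⟩
    set H' : SimpleGraph V := cut H a with hH'
    set E1 : Set (Sym2 V) := {e | e ∈ H.edgeSet ∧ ∀ x ∈ e, H.Reachable a x} with hE1
    set Mc : Set V := {m | m ∈ M ∧ H.Reachable a m} with hMc
    set M' : Set V := {m | m ∈ M ∧ ¬H.Reachable a m} with hM'
    have hsplit : H.edgeSet = E1 ∪ H'.edgeSet := by
      ext e
      refine Sym2.ind (fun x y => ?_) e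
      simp only [hE1, hH', Set.mem_union, Set.mem_setOf_eq, mem_edgeSet, cut, Sym2.mem_iff]
      constructor
      · intro hxy
        by_cases hr : H.Reachable a x
        · exact Or.inl ⟨hxy, by rintro w (rfl | rfl); exact hr; exact hr.trans hxy.reachable⟩
        · refine Or.inr ⟨hxy, hr, fun h => hr (h.trans hxy.reachable.symm)⟩
      · rintro (⟨h, _⟩ | ⟨h, _⟩) <;> exact h
    have hdisj : Disjoint E1 H'.edgeSet := by
      rw [Set.disjoint_left]
      intro e
      refine Sym2.ind (fun x y => ?_) e
      rintro ⟨_, hall⟩ he'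
      rw [mem_edgeSet] at he'
      exact he'.2.1 (hall x (by simp))
    have hcard : H.edgeSet.ncard = E1.ncard + H'.edgeSet.ncard := by
      rw [hsplit, Set.ncard_union_eq hdisj]
    have hE1pos : 1 ≤ E1.ncard := by
      have hmem : s(a, b) ∈ E1 := by
        rw [hE1]
        refine ⟨hab, ?_⟩
        intro w hw
        rw [Sym2.mem_iff] at hw
        rcases hw with rfl | rfl
        exacts [Reachable.refl _, hab.reachable]
      have := (Set.ncard_pos (Set.toFinite E1)).mpr ⟨_, hmem⟩
      omega
    have hrec : H'.edgeSet.ncard ≤ n := by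
      rw [hsplit, Set.ncard_union_eq hdisj] at hle
      omega
    have hIH : H'.edgeSet.ncard ≤ 6 * M'.ncard := by
      refine ih H' M' hrec ?_ ?_ ?_
      · intro v1 v2 v3 v4 v5 h1 h2 h3 h4
        exact h5 v1 v2 v3 v4 v5 h1.1 h2.1 h3.1 h4.1
      · intro u
        refine le_trans (Set.ncard_le_ncard ?_ (Set.toFinite _)) (hpend u)
        rintro x ⟨hxM, hxN⟩
        have hxu : H'.Adj x u := by rw [← mem_neighborSet, hxN]; rfl
        have hnra : ¬H.Reachable a x := hxu.2.1
        have hNeq : H.neighborSet x = H'.neighborSet x := by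
          ext w
          simp only [mem_neighborSet]
          constructor
          · intro hw
            exact ⟨hw, hnra, fun h => hnra (h.trans hw.reachable.symm)⟩
          · exact fun hw => hw.1
        refine ⟨fun hxM' => hxM ⟨hxM', hnra⟩, by rw [hNeq, hxN]⟩
      · intro x y hxy
        obtain ⟨m, hmM, hrm⟩ := hreach x y hxy.1
        have hnm : ¬H.Reachable a m := fun h => hxy.2.1 (h.trans hrm.symm)
        obtain ⟨w⟩ := hrm
        exact ⟨m, ⟨hmM, hnm⟩, reach_cut w hxy.2.1⟩
    have hMsplit : M.ncard = Mc.ncard + M'.ncard := by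
      have : M = Mc ∪ M' := by
        ext m
        simp only [hMc, hM', Set.mem_union, Set.mem_setOf_eq]
        by_cases h : H.Reachable a m <;> tauto
      rw [this, Set.ncard_union_eq]
      rw [Set.disjoint_left]
      rintro m ⟨_, h⟩ ⟨_, h'⟩
      exact h' h
    have hcore := core H M a b hab h5 hpend hreach
    rw [hcard, hMsplit]
    rw [← hE1, ← hMc] at hcore
    omega

end Helpers

/-- In the 5-PVC kernel setting: if `|P| ≤ 5k`, every degree is at most `7k + 7`, `G` has no
degree-one false twins, `G − P` has no path on 5 vertices, and every connected component of
`G − P` has a vertex with a neighbor in `P`, then `G − P` has at most `210k² + 210k` edges. -/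
theorem edges_outside_packing_5pvc {V : Type*} [Fintype V] (G : SimpleGraph V) (k : ℕ)
    (P : Finset V) (hP : P.card ≤ 5 * k)
    (hdeg : ∀ x : V, (G.neighborSet x).ncard ≤ 7 * k + 7)
    (htwin : ¬ ∃ u x y : V, x ≠ y ∧ x ≠ u ∧ y ≠ u ∧
      G.neighborSet x = {u} ∧ G.neighborSet y = {u})
    (hP5free : ∀ ⦃a b : V⦄ (p : G.Walk a b), p.IsPath →
      (∀ x ∈ p.support, x ∉ P) → p.length + 1 ≠ 5)
    (hcomp : ∀ x : V, x ∉ P → ∃ (y : V) (w : G.Walk x y),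
      (∀ z ∈ w.support, z ∉ P) ∧ ∃ p ∈ P, G.Adj y p) :
    ({e ∈ G.edgeSet | ∀ x ∈ e, x ∉ (P : Set V)}).ncard ≤ 210 * k ^ 2 + 210 * k := by
  classical
  set H : SimpleGraph V :=
    { Adj := fun x y => G.Adj x y ∧ x ∉ P ∧ y ∉ P
      symm := ⟨by rintro x y ⟨h1, h2, h3⟩; exact ⟨h1.symm, h3, h2⟩⟩
      loopless := ⟨fun x h => G.loopless.irrefl x h.1⟩ } with hHdef
  have hHadj : ∀ x y : V, H.Adj x y ↔ G.Adj x y ∧ x ∉ P ∧ y ∉ P := fun x y => Iff.rfl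
  set M : Set V := {x | x ∉ P ∧ ∃ p ∈ P, G.Adj x p} with hM
  -- the goal set is the edge set of `H`
  have hgoal : ({e ∈ G.edgeSet | ∀ x ∈ e, x ∉ (P : Set V)} : Set (Sym2 V)) = H.edgeSet := by
    ext e
    refine Sym2.ind (fun x y => ?_) e
    simp only [Set.mem_setOf_eq, mem_edgeSet, Sym2.mem_iff, hHadj, Finset.coe_sort_coe,
      Set.mem_compl_iff, Finset.mem_coe]
    constructor
    · rintro ⟨hxy, hmem⟩
      exact ⟨hxy, hmem x (Or.inl rfl), hmem y (Or.inr rfl)⟩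
    · rintro ⟨hxy, hx, hy⟩
      exact ⟨hxy, by rintro w (rfl | rfl) <;> assumption⟩
  rw [hgoal]
  -- no 5-chain in H
  have h5 : ∀ v1 v2 v3 v4 v5 : V, H.Adj v1 v2 → H.Adj v2 v3 → H.Adj v3 v4 → H.Adj v4 v5 →
      v1 ≠ v3 → v1 ≠ v4 → v1 ≠ v5 → v2 ≠ v4 → v2 ≠ v5 → v3 ≠ v5 → False := by
    intro v1 v2 v3 v4 v5 h12 h23 h34 h45 h13 h14 h15 h24 h25 h35
    set w : G.Walk v1 v5 :=
      Walk.cons h12.1 (Walk.cons h23.1 (Walk.cons h34.1 (Walk.cons h45.1 Walk.nil))) with hw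
    have hpath : w.IsPath := by
      rw [Walk.isPath_def, hw]
      simp only [Walk.support_cons, Walk.support_nil]
      refine List.nodup_cons.mpr ⟨?_, ?_⟩
      · simp only [List.mem_cons, List.not_mem_nil, or_false]
        push_neg
        exact ⟨h12.1.ne, h13, h14, h15⟩
      refine List.nodup_cons.mpr ⟨?_, ?_⟩
      · simp only [List.mem_cons, List.not_mem_nil, or_false]
        push_neg
        exact ⟨h23.1.ne, h24, h25⟩
      refine List.nodup_cons.mpr ⟨?_, ?_⟩
      · simp only [List.mem_cons, List.not_mem_nil, or_false]
        push_neg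
        exact ⟨h34.1.ne, h35⟩
      refine List.nodup_cons.mpr ⟨?_, ?_⟩
      · simp only [List.mem_cons, List.not_mem_nil, or_false]
        exact h45.1.ne
      simp
    have hsupp : ∀ x ∈ w.support, x ∉ P := by
      intro x hx
      rw [hw] at hx
      simp only [Walk.support_cons, Walk.support_nil, List.mem_cons,
        List.not_mem_nil, or_false] at hx
      rcases hx with rfl | rfl | rfl | rfl | rfl
      exacts [h12.2.1, h23.2.1, h34.2.1, h45.2.1, h45.2.2]
    have hlen : w.length + 1 = 5 := by rw [hw]; rfl
    exact hP5free w hpath hsupp hlen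
  -- pendant condition
  have hpend : ∀ u : V, ({x | x ∉ M ∧ H.neighborSet x = {u}} : Set V).ncard ≤ 1 := by
    intro u
    rw [Set.ncard_le_one (Set.toFinite _)]
    rintro x ⟨hxM, hxN⟩ y ⟨hyM, hyN⟩
    by_contra hxy
    -- x and y are degree-one false twins in G
    have hG : ∀ z : V, z ∉ M → H.neighborSet z = {u} → G.neighborSet z = {u} := by
      intro z hzM hzN
      have hzu : H.Adj z u := by rw [← mem_neighborSet, hzN]; rfl
      have hzP : z ∉ P := hzu.2.1
      ext w
      simp only [mem_neighborSet, Set.mem_singleton_iff]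
      constructor
      · intro hw
        by_cases hwP : w ∈ P
        · exact absurd ⟨hzP, w, hwP, hw⟩ hzM
        · have : w ∈ H.neighborSet z := ⟨hw, hzP, hwP⟩
          rwa [hzN] at this
      · rintro rfl
        exact hzu.1
    have hxu : H.Adj x u := by rw [← mem_neighborSet, hxN]; rfl
    have hyu : H.Adj y u := by rw [← mem_neighborSet, hyN]; rfl
    exact htwin ⟨u, x, y, hxy, hxu.ne, hyu.ne, hG x hxM hxN, hG y hyM hyN⟩
  -- reachability condition
  have hreach : ∀ x y : V, H.Adj x y → ∃ m ∈ M, H.Reachable x m := by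
    intro x y hxy
    obtain ⟨y0, w, hw, p, hp, hadj⟩ := hcomp x hxy.2.1
    have hy0P : y0 ∉ P := hw y0 w.end_mem_support
    exact ⟨y0, ⟨hy0P, p, hp, hadj⟩, walk_avoid (fun x y h hx hy => (hHadj x y).mpr ⟨h, hx, hy⟩) w hw⟩
  have hkey := key H.edgeSet.ncard H M le_rfl h5 hpend hreach
  -- bound |M| by sum of degrees of P
  have hMle : M.ncard ≤ 5 * k * (7 * k + 7) := by
    classical
    set F : Finset V := P.biUnion (fun p => (G.neighborSet p).toFinset) with hF
    have hsub : M ⊆ (F : Set V) := by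
      rintro x ⟨hxP, p, hp, hadj⟩
      simp only [hF, Finset.coe_biUnion, Set.mem_iUnion, Finset.mem_coe, Finset.mem_biUnion]
      exact ⟨p, hp, by simp [hadj.symm]⟩
    have h1 : M.ncard ≤ F.card := by
      have := Set.ncard_le_ncard hsub (Set.toFinite _)
      rwa [Set.ncard_coe_finset] at this
    have h2 : F.card ≤ P.card * (7 * k + 7) := by
      refine le_trans (Finset.card_biUnion_le) ?_
      refine le_trans (Finset.sum_le_card_nsmul P _ (7 * k + 7) ?_) (le_of_eq (by ring))
      intro p _
      have := hdeg p
      rwa [Set.ncard_eq_toFinset_card'] at this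
    calc M.ncard ≤ P.card * (7 * k + 7) := le_trans h1 h2
      _ ≤ 5 * k * (7 * k + 7) := Nat.mul_le_mul_right _ hP
  calc H.edgeSet.ncard ≤ 6 * M.ncard := hkey
    _ ≤ 6 * (5 * k * (7 * k + 7)) := Nat.mul_le_mul_left _ hMle
    _ = 210 * k ^ 2 + 210 * k := by ring
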